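/- Let h : R^n → R be a function such that h(x) = |x|^{2-p} g1(x/|x|) for all x ≠ 0 (for some function g1 on the unit sphere and some p > 2), and also h(x) = |x - e|^{2-p} g2((x-e)/|x-e|) for all x ≠ e, where e is a fixed unit vector. Then for every x not in the line spanned by e and every real t with t < 1, h(x + t·e) = h(x). -/
import Mathlib


open Set

/-- **Cone-splitting computation (Subcase 1.2, p > 2).**
If `h` is `p`-homothety invariant about `0` and about the unit vector `e`
(i.e. has the radial representations `h x = ‖x‖^(2-p) g1(x/‖x‖)` and
`h x = ‖x-e‖^(2-p) g2((x-e)/‖x-e‖)`), then `h` is invariant under translations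
by `t • e` (with `t < 1`) at every point off the axis `span {e}`. -/
theorem stmt0 (n : ℕ) (p : ℝ) (hp : 2 < p)
    (h g1 g2 : EuclideanSpace ℝ (Fin n) → ℝ)
    (e : EuclideanSpace ℝ (Fin n)) (he : ‖e‖ = 1)
    (h1 : ∀ x : EuclideanSpace ℝ (Fin n), x ≠ 0 →
      h x = ‖x‖ ^ (2 - p) * g1 (‖x‖⁻¹ • x))
    (h2 : ∀ x : EuclideanSpace ℝ (Fin n), x ≠ e →
      h x = ‖x - e‖ ^ (2 - p) * g2 (‖x - e‖⁻¹ • (x - e)))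
    (x : EuclideanSpace ℝ (Fin n)) (hx : x ∉ Submodule.span ℝ ({e} : Set (EuclideanSpace ℝ (Fin n))))
    (t : ℝ) (ht : t < 1) :
    h (x + t • e) = h x := by
  have hx0 : x ≠ 0 := fun h0 => hx (h0 ▸ Submodule.zero_mem _)
  set μ : ℝ := 1 - t with hμdef
  have hμpos : 0 < μ := by simp [hμdef]; linarith
  set lam : ℝ := μ⁻¹ with hlamdef
  have hlampos : 0 < lam := inv_pos.mpr hμpos
  set y : EuclideanSpace ℝ (Fin n) := lam • x with hydef
  have hy_ne : y ≠ e := by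
    intro hyeq
    apply hx
    have hxeq : x = μ • e := by
      have := congrArg (fun z => μ • z) hyeq
      simpa [hydef, smul_smul, hlamdef, mul_inv_cancel₀ hμpos.ne'] using this
    rw [hxeq]
    exact Submodule.smul_mem _ _ (Submodule.mem_span_singleton_self e)
  have hy0 : y ≠ 0 := smul_ne_zero hlampos.ne' hx0
  have hxt_ne : x + t • e ≠ e := by
    intro hEq
    apply hx
    have : x = μ • e := by
      have hx' : x = e - t • e := by rw [eq_sub_iff_add_eq]; exact hEq
      rw [hx', hμdef, sub_smul, one_smul]
    rw [this]
    exact Submodule.smul_mem _ _ (Submodule.mem_span_singleton_self e)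
  have key : x + t • e - e = μ • (y - e) := by
    rw [hydef, smul_sub, smul_smul, hlamdef, mul_inv_cancel₀ hμpos.ne', one_smul, hμdef]
    rw [sub_smul, one_smul]
    abel
  have hnorm : ‖μ • (y - e)‖ = μ * ‖y - e‖ := by
    rw [norm_smul, Real.norm_eq_abs, abs_of_pos hμpos]
  have hnx : ‖x‖ ≠ 0 := norm_ne_zero_iff.mpr hx0
  have hnye : ‖y - e‖ ≠ 0 := norm_ne_zero_iff.mpr (sub_ne_zero.mpr hy_ne)
  have hunit : ‖μ • (y - e)‖⁻¹ • (μ • (y - e)) = ‖y - e‖⁻¹ • (y - e) := by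
    rw [hnorm, smul_smul]
    congr 1
    field_simp
  have hny : ‖y‖ = lam * ‖x‖ := by
    rw [hydef, norm_smul, Real.norm_eq_abs, abs_of_pos hlampos]
  have hunit1 : ‖y‖⁻¹ • y = ‖x‖⁻¹ • x := by
    rw [hny, hydef, smul_smul]
    congr 1
    field_simp
  have hyval : h y = lam ^ (2 - p) * h x := by
    rw [h1 y hy0, hunit1, hny, Real.mul_rpow hlampos.le (norm_nonneg x), mul_assoc,
      ← h1 x hx0]
  calc h (x + t • e) = ‖x + t • e - e‖ ^ (2 - p) * g2 (‖x + t • e - e‖⁻¹ • (x + t • e - e)) :=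
        h2 _ hxt_ne
    _ = (μ * ‖y - e‖) ^ (2 - p) * g2 (‖y - e‖⁻¹ • (y - e)) := by rw [key, hunit, hnorm]
    _ = μ ^ (2 - p) * (‖y - e‖ ^ (2 - p) * g2 (‖y - e‖⁻¹ • (y - e))) := by
        rw [Real.mul_rpow hμpos.le (norm_nonneg _), mul_assoc]
    _ = μ ^ (2 - p) * h y := by rw [← h2 y hy_ne]
    _ = μ ^ (2 - p) * (lam ^ (2 - p) * h x) := by rw [hyval]
    _ = (μ * lam) ^ (2 - p) * h x := by
        rw [Real.mul_rpow hμpos.le hlampos.le, mul_assoc]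
    _ = h x := by
        rw [hlamdef, mul_inv_cancel₀ hμpos.ne', Real.one_rpow, one_mul]
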